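/- Let G = (V,E) be a finite simple undirected graph with vertex weights ω: V → ℝ satisfying ω(v) ≥ 1 for all v, let η ≥ 0, and let f be an η-locally-stable weighted fractional edge-load assignment on G with vertex loads ℓ_v and maximum load ρ̂ = max_{v∈V} ℓ_v. For each integer i ≥ 0 define T_i = { v ∈ V : ℓ_v ≥ ρ̂ − η·i }. Then for every integer k ≥ 0, Σ_{u∈T_k} ω(u)·ℓ_u ≤ |E(T_{k+1})|; in particular |E(T_{k+1})| ≥ ω(T_k)·(ρ̂ − η·k). -/
import Mathlib


open Finset

/-- Weighted level-set bound: for an η-locally-stable weighted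
fractional edge-load assignment with maximum load `ρ̂` and level sets
`T_i = {v : ℓ_v ≥ ρ̂ − η·i}`, for every `k ≥ 0` we have
`Σ_{u∈T_k} ω(u)·ℓ_u ≤ |E(T_{k+1})|`; in particular `|E(T_{k+1})| ≥ ω(T_k)·(ρ̂ − η·k)`. -/
theorem weighted_level_set_load_bound
    {V : Type*} [Fintype V] [DecidableEq V]
    (G : SimpleGraph V) [DecidableRel G.Adj]
    (ω : V → ℝ) (hω : ∀ v : V, 1 ≤ ω v)
    (η : ℝ) (hη : 0 ≤ η)
    (f : Sym2 V → V → ℝ)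
    (hf_nonneg : ∀ u v : V, G.Adj u v → 0 ≤ f s(u, v) u)
    (hf_sum : ∀ u v : V, G.Adj u v → f s(u, v) u + f s(u, v) v = 1)
    (ℓ : V → ℝ)
    (hℓ : ∀ v : V, ℓ v = (1 / ω v) * ∑ e ∈ G.edgeFinset.filter (fun e => v ∈ e), f e v)
    (hstab : ∀ u v : V, G.Adj u v → 0 < f s(u, v) u → ℓ u ≤ ℓ v + η)
    (ρhat : ℝ)
    (hρhat_ub : ∀ v : V, ℓ v ≤ ρhat)
    (hρhat_mem : ∃ v : V, ℓ v = ρhat)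
    (T : ℕ → Finset V)
    (hT : ∀ i : ℕ, T i = Finset.univ.filter (fun v => ρhat - η * i ≤ ℓ v)) :
    ∀ k : ℕ,
      (∑ u ∈ T k, ω u * ℓ u ≤
        ((G.edgeFinset.filter (fun e => e ∈ (T (k + 1)).sym2)).card : ℝ)) ∧
      ((∑ v ∈ T k, ω v) * (ρhat - η * k) ≤
        ((G.edgeFinset.filter (fun e => e ∈ (T (k + 1)).sym2)).card : ℝ)) := by
  intro k
  have hωpos : ∀ v : V, (0:ℝ) < ω v := fun v => lt_of_lt_of_le one_pos (hω v)
  -- key claim: if f s(x,y) x > 0 and x ∈ T k then x, y ∈ T (k+1)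
  have claim : ∀ x y : V, G.Adj x y → x ∈ T k → 0 < f s(x, y) x →
      x ∈ T (k+1) ∧ y ∈ T (k+1) := by
    intro x y hxy hxk hpos
    have hx : ρhat - η * k ≤ ℓ x := by
      rw [hT k] at hxk; exact (Finset.mem_filter.mp hxk).2
    have hxy' : ℓ x ≤ ℓ y + η := hstab x y hxy hpos
    constructor
    · rw [hT (k+1)]
      refine Finset.mem_filter.mpr ⟨Finset.mem_univ x, ?_⟩
      push_cast
      nlinarith
    · rw [hT (k+1)]
      refine Finset.mem_filter.mpr ⟨Finset.mem_univ y, ?_⟩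
      push_cast
      nlinarith
  have key : ∑ u ∈ T k, ω u * ℓ u ≤
      ((G.edgeFinset.filter (fun e => e ∈ (T (k + 1)).sym2)).card : ℝ) := by
    have h1 : ∑ u ∈ T k, ω u * ℓ u
        = ∑ u ∈ T k, ∑ e ∈ G.edgeFinset.filter (fun e => u ∈ e), f e u := by
      refine Finset.sum_congr rfl fun u _ => ?_
      rw [hℓ u, ← mul_assoc, mul_one_div_cancel (hωpos u).ne', one_mul]
    have h2 : ∑ u ∈ T k, ∑ e ∈ G.edgeFinset.filter (fun e => u ∈ e), f e u
        = ∑ e ∈ G.edgeFinset, ∑ u ∈ (T k).filter (fun u => u ∈ e), f e u := by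
      simp_rw [Finset.sum_filter]
      exact Finset.sum_comm
    rw [h1, h2, Finset.card_filter]
    push_cast
    refine Finset.sum_le_sum fun e he => ?_
    induction e using Sym2.inductionOn with
    | hf a b =>
      have hab : G.Adj a b := by rwa [SimpleGraph.mem_edgeFinset, SimpleGraph.mem_edgeSet] at he
      have hne : a ≠ b := hab.ne
      have hfa : 0 ≤ f s(a, b) a := hf_nonneg a b hab
      have hfb : 0 ≤ f s(a, b) b := by
        have := hf_nonneg b a hab.symm
        rwa [Sym2.eq_swap] at this
      have hmemab : ∀ u ∈ (T k).filter (fun u => u ∈ s(a, b)), u = a ∨ u = b := by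
        intro u hu
        have := (Finset.mem_filter.mp hu).2
        rwa [Sym2.mem_iff] at this
      have hnn : ∀ u ∈ (T k).filter (fun u => u ∈ s(a, b)), 0 ≤ f s(a, b) u := by
        intro u hu
        rcases hmemab u hu with rfl | rfl
        · exact hfa
        · exact hfb
      by_cases hpos : ∃ u ∈ (T k).filter (fun u => u ∈ s(a, b)), 0 < f s(a, b) u
      · obtain ⟨u, huS, hupos⟩ := hpos
        have huk : u ∈ T k := (Finset.mem_filter.mp huS).1
        have hboth : a ∈ T (k+1) ∧ b ∈ T (k+1) := by
          rcases hmemab u huS with rfl | rfl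
          · exact claim u b hab huk hupos
          · have := claim u a hab.symm huk (by rwa [Sym2.eq_swap] at hupos)
            exact ⟨this.2, this.1⟩
        have hmem : s(a, b) ∈ (T (k+1)).sym2 :=
          Finset.mk_mem_sym2_iff.mpr ⟨hboth.1, hboth.2⟩
        rw [if_pos hmem]
        calc ∑ u ∈ (T k).filter (fun u => u ∈ s(a, b)), f s(a, b) u
            ≤ ∑ u ∈ ({a, b} : Finset V), f s(a, b) u := by
              refine Finset.sum_le_sum_of_subset_of_nonneg ?_ ?_
              · intro u hu
                rcases hmemab u hu with rfl | rfl
                · exact Finset.mem_insert_self _ _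
                · exact Finset.mem_insert_of_mem (Finset.mem_singleton_self _)
              · intro u hu _
                rcases Finset.mem_insert.mp hu with rfl | hu'
                · exact hfa
                · rw [Finset.mem_singleton] at hu'; subst hu'; exact hfb
          _ = f s(a, b) a + f s(a, b) b := Finset.sum_pair hne
          _ = 1 := hf_sum a b hab
      · push_neg at hpos
        have hzero : ∑ u ∈ (T k).filter (fun u => u ∈ s(a, b)), f s(a, b) u ≤ 0 := by
          apply Finset.sum_nonpos
          intro u hu
          exact hpos u hu
        refine hzero.trans ?_
        split <;> norm_num
  refine ⟨key, ?_⟩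
  refine le_trans ?_ key
  rw [Finset.sum_mul]
  refine Finset.sum_le_sum fun v hv => ?_
  have hvk : ρhat - η * k ≤ ℓ v := by
    rw [hT k] at hv; exact (Finset.mem_filter.mp hv).2
  exact mul_le_mul_of_nonneg_left hvk (hωpos v).le
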